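/- For integers k ≥ 2, define λ_{(k,ℓ)} as the largest real root of f_{(k,ℓ)}(t) = t^{2k} - t^{k+ℓ} - t^k - t^{k-ℓ} + 1 for 0 < ℓ < k. Then λ_{(k,ℓ)} > 1 exists (the polynomial has a root greater than 1), and for fixed ℓ = 1, the sequence k·log λ_{(k,1)} converges to log((3+√5)/2) as k → ∞. -/

import Mathlib

open Filter

theorem stmt_19 :
    (∀ k ℓ : ℕ, 2 ≤ k → 0 < ℓ → ℓ < k →
      ∃ t : ℝ, 1 < t ∧
        t ^ (2 * k) - t ^ (k + ℓ) - t ^ k - t ^ (k - ℓ) + 1 = 0) ∧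
    (∀ L : ℕ → ℝ,
      (∀ k : ℕ, 2 ≤ k →
        1 < L k ∧
        (L k) ^ (2 * k) - (L k) ^ (k + 1) - (L k) ^ k - (L k) ^ (k - 1) + 1 = 0 ∧
        (∀ s : ℝ, s ^ (2 * k) - s ^ (k + 1) - s ^ k - s ^ (k - 1) + 1 = 0 → s ≤ L k)) →
      Tendsto (fun k : ℕ => (k : ℝ) * Real.log (L k)) atTop
        (nhds (Real.log ((3 + Real.sqrt 5) / 2)))) := by
  constructor
  · intro k ℓ hk hℓ hℓk
    set f : ℝ → ℝ := fun t => t ^ (2 * k) - t ^ (k + ℓ) - t ^ k - t ^ (k - ℓ) + 1 with hf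
    have hcont : ContinuousOn f (Set.Icc (1:ℝ) 3) := by
      apply Continuous.continuousOn; fun_prop
    have hf1 : f 1 = -1 := by norm_num [hf]
    have hf3 : 0 < f 3 := by
      have h1 : (3:ℝ) ^ (k + ℓ) ≤ 3 ^ (2 * k - 1) := pow_le_pow_right₀ (by norm_num) (by omega)
      have h2 : (3:ℝ) ^ k ≤ 3 ^ (2 * k - 1) := pow_le_pow_right₀ (by norm_num) (by omega)
      have h3 : (3:ℝ) ^ (k - ℓ) ≤ 3 ^ (2 * k - 1) := pow_le_pow_right₀ (by norm_num) (by omega)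
      have h4 : (3:ℝ) ^ (2 * k) = 3 ^ (2 * k - 1) * 3 := by
        rw [← pow_succ]; congr 1; omega
      simp only [hf]
      nlinarith [pow_pos (by norm_num : (0:ℝ) < 3) (2*k-1)]
    have := intermediate_value_Icc (by norm_num : (1:ℝ) ≤ 3) hcont
    have h0 : (0:ℝ) ∈ Set.Icc (f 1) (f 3) := by
      constructor <;> [linarith [hf1.le]; linarith]
    obtain ⟨t, ht, hft⟩ := this h0
    refine ⟨t, ?_, hft⟩
    rcases lt_or_eq_of_le ht.1 with h | h
    · exact h
    · exfalso; rw [← h] at hft; rw [hf1] at hft; norm_num at hft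
  · intro L hL
    -- key facts for k ≥ 2
    have key : ∀ k : ℕ, 2 ≤ k → (L k) ^ k < 4 ∧
        (L k) ^ k = (L k + 1 + (L k)⁻¹ + Real.sqrt ((L k + 1 + (L k)⁻¹) ^ 2 - 4)) / 2 := by
      intro k hk
      obtain ⟨hx, heq, -⟩ := hL k hk
      set x := L k with hxdef
      have hx0 : (0:ℝ) < x := lt_trans one_pos hx
      have hxne : x ≠ 0 := ne_of_gt hx0
      have hy1 : 1 < x ^ k := one_lt_pow₀ hx (by omega)
      have hy0 : (0:ℝ) < x ^ k := lt_trans one_pos hy1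
      have hk1 : x ^ (k - 1) * x = x ^ k := by rw [← pow_succ]; congr 1; omega
      have h2k : x ^ (2 * k) = (x ^ k) ^ 2 := by
        rw [show 2 * k = k * 2 from by ring, pow_mul]
      have hks : x ^ (k + 1) = x ^ k * x := pow_succ x k
      have hinv : x ^ k * x⁻¹ = x ^ (k - 1) := by
        field_simp
        linarith [hk1]
      have hquad : (x ^ k) ^ 2 - (x + 1 + x⁻¹) * (x ^ k) + 1 = 0 := by
        have : (x ^ k) ^ 2 + 1 = x ^ (k+1) + x ^ k + x ^ (k-1) := by
          rw [← h2k]; linarith [heq]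
        rw [hks, ← hinv] at this
        nlinarith [this]
      have h2yc : 0 ≤ 2 * (x ^ k) - (x + 1 + x⁻¹) := by
        nlinarith [hquad, hy1, hy0]
      have hsq : Real.sqrt ((x + 1 + x⁻¹) ^ 2 - 4) = 2 * (x ^ k) - (x + 1 + x⁻¹) := by
        rw [show (x + 1 + x⁻¹) ^ 2 - 4 = (2 * (x ^ k) - (x + 1 + x⁻¹)) ^ 2 from by
          linear_combination (-4 : ℝ) * hquad]
        exact Real.sqrt_sq h2yc
      have hxinv1 : x⁻¹ < 1 := inv_lt_one_of_one_lt₀ hx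
      have hyc : x ^ k < x + 1 + x⁻¹ := by nlinarith [hquad, hy1, hy0]
      have hx2k : x ^ 2 ≤ x ^ k := pow_le_pow_right₀ hx.le hk
      have hx2 : x < 2 := by nlinarith
      constructor
      · nlinarith
      · rw [hsq]; ring
    -- L k → 1
    have hLpos : ∀ᶠ k in atTop, 0 < L k := by
      filter_upwards [eventually_ge_atTop 2] with k hk
      exact lt_trans one_pos (hL k hk).1
    have hloglim : Tendsto (fun k : ℕ => Real.log (L k)) atTop (nhds 0) := by
      apply tendsto_of_tendsto_of_tendsto_of_le_of_le' (g := fun _ : ℕ => (0:ℝ))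
        (h := fun k : ℕ => Real.log 4 / k) tendsto_const_nhds
        (tendsto_const_div_atTop_nhds_zero_nat (Real.log 4))
      · filter_upwards [eventually_ge_atTop 2] with k hk
        exact (Real.log_pos (hL k hk).1).le
      · filter_upwards [eventually_ge_atTop 2] with k hk
        have h4 := (key k hk).1
        have hx := (hL k hk).1
        have hx0 : (0:ℝ) < L k := lt_trans one_pos hx
        have : Real.log ((L k) ^ k) ≤ Real.log 4 :=
          Real.log_le_log (pow_pos hx0 k) h4.le
        rw [Real.log_pow] at this
        have hk0 : (0:ℝ) < (k : ℝ) := by positivity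
        rw [le_div_iff₀ hk0]
        linarith [this]
    have hLlim : Tendsto L atTop (nhds 1) := by
      have := (Real.continuous_exp.tendsto 0).comp hloglim
      rw [Real.exp_zero] at this
      apply this.congr'
      filter_upwards [hLpos] with k hk
      simp [Real.exp_log hk]
    have hc : Tendsto (fun k : ℕ => L k + 1 + (L k)⁻¹) atTop (nhds 3) := by
      have h1 : Tendsto (fun k : ℕ => (L k)⁻¹) atTop (nhds 1) := by
        have := hLlim.inv₀ (one_ne_zero)
        simpa using this
      have h2 : Tendsto (fun k : ℕ => L k + 1 + (L k)⁻¹) atTop (nhds (1 + 1 + 1)) :=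
        (hLlim.add (tendsto_const_nhds (x := (1:ℝ)))).add h1
      norm_num at h2
      exact h2
    have hsqrt : Tendsto (fun k : ℕ => Real.sqrt ((L k + 1 + (L k)⁻¹) ^ 2 - 4)) atTop
        (nhds (Real.sqrt 5)) := by
      have h1 : Tendsto (fun k : ℕ => (L k + 1 + (L k)⁻¹) ^ 2 - 4) atTop (nhds 5) := by
        have := (hc.pow 2).sub (tendsto_const_nhds (x := (4:ℝ)))
        norm_num at this
        exact this
      exact (Real.continuous_sqrt.tendsto 5).comp h1
    have hy : Tendsto (fun k : ℕ => (L k) ^ k) atTop (nhds ((3 + Real.sqrt 5) / 2)) := by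
      have h1 : Tendsto (fun k : ℕ => (L k + 1 + (L k)⁻¹ + Real.sqrt ((L k + 1 + (L k)⁻¹) ^ 2 - 4)) / 2)
          atTop (nhds ((3 + Real.sqrt 5) / 2)) := (hc.add hsqrt).div_const 2
      apply h1.congr'
      filter_upwards [eventually_ge_atTop 2] with k hk
      exact ((key k hk).2).symm
    have hmu : (0:ℝ) < (3 + Real.sqrt 5) / 2 := by positivity
    have := (Real.continuousAt_log hmu.ne').tendsto.comp hy
    simp only [Function.comp_def, Real.log_pow] at this
    exact this
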